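/- Let A be an n×n real matrix, Q an n×n positive semidefinite real matrix, C an m×n real matrix, and R an m×m positive definite real matrix. Define h(X) = A X Aᵀ + Q and g̃(X) = X − X Cᵀ (C X Cᵀ + R)⁻¹ C X, and let P̄ be an n×n positive semidefinite matrix satisfying g̃(h(P̄)) = P̄. Then for all natural numbers t₁ ≤ t₂, trace(h^{t₁}(P̄)) ≤ trace(h^{t₂}(P̄)). -/

import Mathlib

open Matrix

lemma psd_trace_nonneg {n : ℕ} {M : Matrix (Fin n) (Fin n) ℝ} (hM : M.PosSemidef) :
    0 ≤ M.trace := by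
  have h : ∀ i, 0 ≤ M i i := fun i => by
    exact hM.diag_nonneg
  exact Finset.sum_nonneg fun i _ => h i

/-- Lemma 2.3 of Shi et al. (trace form): if `P̄` is a positive semidefinite
solution of the steady-state Riccati equation `g̃(h(P̄)) = P̄`, then the traces of
the Lyapunov iterates `h^[t] P̄` are monotone: for `t₁ ≤ t₂`,
`trace (h^[t₁] P̄) ≤ trace (h^[t₂] P̄)`. -/
theorem lyapunov_iterates_steady_state_trace_mono {n m : ℕ}
    (A Q : Matrix (Fin n) (Fin n) ℝ) (hQ : Q.PosSemidef)
    (C : Matrix (Fin m) (Fin n) ℝ)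
    (R : Matrix (Fin m) (Fin m) ℝ) (hR : R.PosDef)
    (Pbar : Matrix (Fin n) (Fin n) ℝ) (hPbar : Pbar.PosSemidef)
    (hfix : (A * Pbar * Aᵀ + Q) -
        (A * Pbar * Aᵀ + Q) * Cᵀ * (C * (A * Pbar * Aᵀ + Q) * Cᵀ + R)⁻¹ *
          (C * (A * Pbar * Aᵀ + Q)) = Pbar)
    (t₁ t₂ : ℕ) (ht : t₁ ≤ t₂) :
    ((fun Z => A * Z * Aᵀ + Q)^[t₁] Pbar).trace ≤ ((fun Z => A * Z * Aᵀ + Q)^[t₂] Pbar).trace := by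
  set h : Matrix (Fin n) (Fin n) ℝ → Matrix (Fin n) (Fin n) ℝ := fun Z => A * Z * Aᵀ + Q with hh
  -- H := h(Pbar)
  set H : Matrix (Fin n) (Fin n) ℝ := A * Pbar * Aᵀ + Q with hH
  have hHpsd : H.PosSemidef := by
    have : (A * Pbar * Aᵀ).PosSemidef := by
      have := hPbar.mul_mul_conjTranspose_same A
      simpa using this
    exact this.add hQ
  have hSpd : (C * H * Cᵀ + R)⁻¹.PosDef := by
    have h1 : (C * H * Cᵀ).PosSemidef := by
      have := hHpsd.mul_mul_conjTranspose_same C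
      simpa using this
    exact (Matrix.PosDef.posSemidef_add h1 hR).inv
  -- h(Pbar) - Pbar is PSD
  have hD : (H - Pbar).PosSemidef := by
    have hHsymm : Hᵀ = H := hHpsd.1
    have : H - Pbar = (C * H)ᵀ * (C * H * Cᵀ + R)⁻¹ * (C * H) := by
      conv_lhs => rw [← hfix]
      rw [sub_sub_cancel, transpose_mul, hHsymm]
    rw [this]
    have := hSpd.posSemidef.mul_mul_conjTranspose_same (C * H)ᵀ
    simpa [Matrix.mul_assoc] using this
  -- each step's difference is PSD
  have hstep : ∀ t : ℕ, (h^[t + 1] Pbar - h^[t] Pbar).PosSemidef := by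
    intro t
    induction t with
    | zero => simpa [hh, hH] using hD
    | succ t ih =>
      have e : h^[t + 1 + 1] Pbar - h^[t + 1] Pbar
          = A * (h^[t + 1] Pbar - h^[t] Pbar) * Aᵀ := by
        rw [Function.iterate_succ_apply' h (t+1), Function.iterate_succ_apply' h t]
        simp only [hh, Matrix.mul_sub, Matrix.sub_mul]
        abel
      rw [e]
      have := ih.mul_mul_conjTranspose_same A
      simpa using this
  -- trace monotone in one step
  have hmono : ∀ t : ℕ, (h^[t] Pbar).trace ≤ (h^[t + 1] Pbar).trace := by
    intro t
    have := psd_trace_nonneg (hstep t)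
    rw [trace_sub] at this
    linarith
  induction t₂ with
  | zero => simp_all
  | succ t₂ ih =>
    rcases Nat.lt_or_ge t₁ (t₂ + 1) with hlt | hge
    · exact le_trans (ih (Nat.lt_succ_iff.mp hlt)) (hmono t₂)
    · have : t₁ = t₂ + 1 := le_antisymm ht hge
      subst this; rfl
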